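/- arXiv:0905.1374 — 2 statements merged into one kernel-verified Lean document; each statement's English description precedes it below -/
import Mathlib

section
/- Let n ≥ 2 and fix the reduced word i = (1)(2,1)(3,2,1)...(n-1,...,1) for the longest element of S_n, of length l = n(n-1)/2. Define the column sets C^(k) = s_{i_1} s_{i_2} ... s_{i_k}({1,...,i_k}) for 1 ≤ k ≤ l. Then each C^(k) is an interval: if a < c < b and a, b ∈ C^(k), then c ∈ C^(k). -/
/-- The word `(1)(2,1)(3,2,1)…(n-1,…,1)`, a reduced word for the longest
element of the symmetric group `S_n`. -/
def BSword (n : ℕ) : List ℕ :=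
  (List.range (n - 1)).flatMap fun j => (((List.range (j + 1)).map (· + 1)).reverse)

/-- The permutation `s_{i_1} s_{i_2} ⋯ s_{i_k}`, product of the adjacent
transpositions given by the first `k` letters of the word, acting on `ℕ`
(only `{1,…,n}` is moved). -/
noncomputable def BSperm (n k : ℕ) : Equiv.Perm ℕ :=
  (((BSword n).take k).map fun i => Equiv.swap i (i + 1)).prod

/-- The column set `C^(k+1) = s_{i_1} ⋯ s_{i_{k+1}} {1, …, i_{k+1}}`
(here `k` is 0-indexed, so `BScolumn n k` is the column set `C^(k+1)` of the paper). -/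
noncomputable def BScolumn (n k : ℕ) : Finset ℕ :=
  (Finset.Icc 1 ((BSword n).getD k 0)).image (BSperm n (k + 1))


/- auxiliary definitions -/
def blockW (j : ℕ) : List ℕ := (((List.range (j + 1)).map (· + 1)).reverse)

noncomputable def Bperm (j : ℕ) : Equiv.Perm ℕ :=
  ((blockW j).map fun i => Equiv.swap i (i + 1)).prod

noncomputable def Wf (j : ℕ) : Equiv.Perm ℕ :=
  (((List.range j).flatMap blockW).map fun i => Equiv.swap i (i + 1)).prod

noncomputable def Pp (j t : ℕ) : Equiv.Perm ℕ :=
  (((blockW j).take t).map fun i => Equiv.swap i (i + 1)).prod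

def Tn : ℕ → ℕ
  | 0 => 0
  | j + 1 => Tn j + (j + 1)


lemma bind_append' (l1 l2 : List ℕ) (f : ℕ → List ℕ) :
    (l1 ++ l2).flatMap f = l1.flatMap f ++ l2.flatMap f := by
  simp [List.flatMap]

lemma BSword_eq (n : ℕ) : BSword n = (List.range (n - 1)).flatMap blockW := rfl

lemma blockW_length (j : ℕ) : (blockW j).length = j + 1 := by simp [blockW]

lemma blockW_succ (j : ℕ) : blockW (j + 1) = (j + 2) :: blockW j := by
  simp [blockW, List.range_succ]

lemma blockW_getD (j i : ℕ) (hi : i ≤ j) : (blockW j).getD i 0 = j + 1 - i := by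
  have h : i < (blockW j).length := by rw [blockW_length]; omega
  rw [List.getD_eq_getElem _ _ h]
  simp [blockW]
  omega

lemma Bperm_apply (j : ℕ) : ∀ x, Bperm j x =
    if x = 1 then j + 2 else if 2 ≤ x ∧ x ≤ j + 2 then x - 1 else x := by
  induction j with
  | zero =>
    intro x
    show (Equiv.swap 1 2) x = _
    rw [Equiv.swap_apply_def]
    split_ifs <;> omega
  | succ j ih =>
    intro x
    have : Bperm (j + 1) = Equiv.swap (j + 1 + 1) (j + 1 + 1 + 1) * Bperm j := by
      rw [Bperm, blockW_succ, List.map_cons, List.prod_cons]; rfl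
    rw [this, Equiv.Perm.mul_apply, ih, Equiv.swap_apply_def]
    split_ifs <;> omega

lemma Wf_apply (j : ℕ) : ∀ x, Wf j x =
    if 1 ≤ x ∧ x ≤ j + 1 then j + 2 - x else x := by
  induction j with
  | zero =>
    intro x
    show (1 : Equiv.Perm ℕ) x = _
    simp only [Equiv.Perm.coe_one, id_eq]
    split_ifs <;> omega
  | succ j ih =>
    intro x
    have : Wf (j + 1) = Wf j * Bperm j := by
      rw [Wf, List.range_succ, bind_append', List.map_append, List.prod_append]
      simp [Wf, Bperm, blockW]
    rw [this, Equiv.Perm.mul_apply, Bperm_apply, ih]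
    split_ifs <;> omega

lemma Pp_succ (j t : ℕ) (ht : t ≤ j) :
    Pp j (t + 1) = Pp j t * Equiv.swap (j + 1 - t) (j + 1 - t + 1) := by
  have h : t < (blockW j).length := by rw [blockW_length]; omega
  have hval : (blockW j)[t] = j + 1 - t := by
    rw [← List.getD_eq_getElem _ 0 h]; exact blockW_getD j t ht
  rw [Pp, ← List.take_concat_get h, hval, List.concat_eq_append,
    List.map_append, List.prod_append]
  simp [Pp]

lemma Pp_apply (j : ℕ) : ∀ t, t ≤ j + 1 → ∀ x, Pp j t x =
    if x = j + 2 - t then j + 2 else if j + 3 - t ≤ x ∧ x ≤ j + 2 then x - 1 else x := by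
  intro t
  induction t with
  | zero =>
    intro _ x
    show (1 : Equiv.Perm ℕ) x = _
    simp only [Equiv.Perm.coe_one, id_eq]
    split_ifs <;> omega
  | succ t ih =>
    intro ht x
    rw [Pp_succ j t (by omega), Equiv.Perm.mul_apply, ih (by omega),
      Equiv.swap_apply_def]
    split_ifs <;> omega

lemma len_prefix (j : ℕ) : ((List.range j).flatMap blockW).length = Tn j := by
  induction j with
  | zero => simp [Tn]
  | succ j ih => rw [List.range_succ, bind_append']; simp [Tn, ih, blockW_length]

lemma BSword_decomp (n j : ℕ) (hj : j < n - 1) :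
    ∃ R, BSword n = (List.range j).flatMap blockW ++ (blockW j ++ R) := by
  have h1 : n - 1 = j + (n - 1 - j) := by omega
  have h2 : n - 1 - j = (n - 2 - j) + 1 := by omega
  rw [BSword_eq, h1, List.range_add, bind_append', h2, List.range_succ_eq_map]
  refine ⟨(List.map (fun x => j + x) (List.map Nat.succ (List.range (n - 2 - j)))).flatMap blockW, ?_⟩
  simp [List.flatMap]

lemma take_BSword (n j t : ℕ) (hj : j < n - 1) (ht : t ≤ j + 1) :
    (BSword n).take (Tn j + t) = (List.range j).flatMap blockW ++ (blockW j).take t := by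
  obtain ⟨R, hR⟩ := BSword_decomp n j hj
  rw [hR, ← len_prefix j, List.take_append,
    List.take_append_of_le_length (by rw [blockW_length]; omega)]
  simp

lemma BSperm_eq (n j t : ℕ) (hj : j < n - 1) (ht : t ≤ j + 1) :
    BSperm n (Tn j + t) = Wf j * Pp j t := by
  rw [BSperm, take_BSword n j t hj ht, List.map_append, List.prod_append]; rfl

lemma letter_eq (n j s : ℕ) (hj : j < n - 1) (hs : s ≤ j) :
    (BSword n).getD (Tn j + s) 0 = j + 1 - s := by
  obtain ⟨R, hR⟩ := BSword_decomp n j hj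
  rw [hR, List.getD_append_right _ _ _ _ (by rw [len_prefix]; omega),
    len_prefix]
  have h : Tn j + s - Tn j = s := by omega
  rw [h]
  have h2 : s < (blockW j).length := by rw [blockW_length]; omega
  rw [List.getD_eq_getElem _ 0 (by simp [h2]; omega)]
  rw [List.getElem_append_left h2, ← List.getD_eq_getElem _ 0 h2]
  exact blockW_getD j s hs

lemma column_eq (n j s : ℕ) (hj : j < n - 1) (hs : s ≤ j) :
    BScolumn n (Tn j + s) = Finset.Icc (s + 2) (j + 2) := by
  have hperm : BSperm n (Tn j + s + 1) = Wf j * Pp j (s + 1) := by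
    have : Tn j + s + 1 = Tn j + (s + 1) := by omega
    rw [this]; exact BSperm_eq n j (s + 1) hj (by omega)
  have happ : ∀ x, (BSperm n (Tn j + s + 1)) x = Wf j (Pp j (s + 1) x) := by
    intro x; rw [hperm, Equiv.Perm.mul_apply]
  rw [BScolumn, letter_eq n j s hj hs]
  apply Finset.eq_of_subset_of_card_le
  · intro y hy
    obtain ⟨x, hx, rfl⟩ := Finset.mem_image.mp hy
    rw [Finset.mem_Icc] at hx ⊢
    rw [happ, Pp_apply j (s + 1) (by omega), Wf_apply]
    split_ifs <;> omega
  · rw [Finset.card_image_of_injective _ (Equiv.injective _), Nat.card_Icc, Nat.card_Icc]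
    omega

lemma exists_jt (k : ℕ) : ∃ j s, s ≤ j ∧ k = Tn j + s := by
  induction k with
  | zero => exact ⟨0, 0, le_refl _, rfl⟩
  | succ k ih =>
    obtain ⟨j, s, hs, hk⟩ := ih
    rcases Nat.lt_or_ge s j with h | h
    · exact ⟨j, s + 1, by omega, by omega⟩
    · refine ⟨j + 1, 0, Nat.zero_le _, ?_⟩
      have : s = j := by omega
      simp [Tn, hk, this]; omega

lemma Tn_mono : Monotone Tn :=
  monotone_nat_of_le_succ fun n => by simp [Tn]

lemma BSword_length (n : ℕ) : (BSword n).length = Tn (n - 1) := by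
  rw [BSword_eq, len_prefix]

/-- Each column set `C^(k)` is an interval: if `a < c < b`
and `a, b ∈ C^(k)` then `c ∈ C^(k)`. -/
theorem column_sets_are_intervals (n : ℕ) (hn : 2 ≤ n)
    (k : ℕ) (hk : k < (BSword n).length)
    (a b c : ℕ) (ha : a ∈ BScolumn n k) (hb : b ∈ BScolumn n k)
    (hac : a < c) (hcb : c < b) : c ∈ BScolumn n k := by
  obtain ⟨j, s, hs, rfl⟩ := exists_jt k
  have hj : j < n - 1 := by
    by_contra h
    have := Tn_mono (show n - 1 ≤ j by omega)
    rw [BSword_length] at hk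
    omega
  rw [column_eq n j s hj hs] at ha hb ⊢
  rw [Finset.mem_Icc] at ha hb ⊢
  omega
end

section
/- Every straight tableau whose shape is a skew Young diagram (k,k,...,k)\(λ_1,...,λ_r) with k ≥ λ_1 ≥ ... ≥ λ_r ≥ 0 is a contra-tableau; that is, if a row-standard filling of such a skew shape satisfies the straightness condition (for cells (i,k') and (j,k') in the same column with i < j, the entry at (i,k') exceeds the entry at (j,k') only if cell (i,k'-1) exists and its entry is ≥ the entry at (j,k')), then the entries in each column are weakly increasing from top to bottom and entries in each row are strictly increasing left to right. -/
/-- Every straight tableau on a skew shape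
`(k,…,k)\(λ₁,…,λ_r)` (with `k ≥ λ₁ ≥ ⋯ ≥ λ_r ≥ 0`) is a contra-tableau.
Rows are indexed `1,…,r` from top to bottom; row `i` occupies columns
`λ_i + 1, …, k`. If a row-standard filling `T` (strictly increasing along rows)
satisfies the straightness condition — for cells `(i,c)` and `(j,c)` in the same
column with `i < j`, the entry at `(i,c)` exceeds the entry at `(j,c)` only if the
cell `(i,c-1)` exists and its entry is `≥` the entry at `(j,c)` — then the entries
of `T` are weakly increasing down each column and strictly increasing along each row. -/
theorem straight_tableau_on_skew_shape_is_contra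
    (k r : ℕ) (lam : ℕ → ℕ) (T : ℕ → ℕ → ℕ)
    (hdec : ∀ i j : ℕ, 1 ≤ i → i ≤ j → j ≤ r → lam j ≤ lam i)
    (hlamk : ∀ i : ℕ, 1 ≤ i → i ≤ r → lam i ≤ k) :
    -- cell `(i, c)` belongs to the skew shape
    let InShape : ℕ → ℕ → Prop := fun i c => 1 ≤ i ∧ i ≤ r ∧ lam i + 1 ≤ c ∧ c ≤ k
    -- row-standard: entries strictly increase from left to right in each row
    (∀ i c c', InShape i c → InShape i c' → c < c' → T i c < T i c') →
    -- straightness condition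
    (∀ i j c, i < j → InShape i c → InShape j c → T j c < T i c →
      (lam i + 1 ≤ c - 1) ∧ T j c ≤ T i (c - 1)) →
    -- conclusion: `T` is a contra-tableau
    ((∀ i j c, i < j → InShape i c → InShape j c → T i c ≤ T j c) ∧
     (∀ i c c', InShape i c → InShape i c' → c < c' → T i c < T i c')) := by
  intro InShape hrow hstraight
  refine ⟨?_, hrow⟩
  intro i j c
  induction c using Nat.strong_induction_on with
  | _ c ih =>
    intro hij hic hjc
    by_contra h
    push_neg at h
    obtain ⟨h1, h2⟩ := hstraight i j c hij hic hjc h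
    have hlamji : lam j ≤ lam i := hdec i j hic.1 (le_of_lt hij) hjc.2.1
    have hic1 : InShape i (c - 1) := ⟨hic.1, hic.2.1, h1, by omega⟩
    have hjc1 : InShape j (c - 1) := ⟨hjc.1, hjc.2.1, by omega, by omega⟩
    have h3 : T j (c - 1) < T j c := hrow j (c - 1) c hjc1 hjc (by omega)
    have h4 : T i (c - 1) ≤ T j (c - 1) := ih (c - 1) (by omega) hij hic1 hjc1
    omega
end
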